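/- For all integers a ≥ 0 and b ≥ 0, the characteristic polynomial of the 3×3 integer matrix with rows (0,1,0), (0,0,1), (1,1+a−b,−(a+2)(b+1)) equals X³ + (a+2)(b+1)X² − (1+a−b)X − 1; it is irreducible over ℚ and has three distinct real roots. -/

import Mathlib

open Matrix Polynomial

/-- An integer polynomial has three distinct real roots. -/
def hasThreeDistinctRealRoots (p : Polynomial ℤ) : Prop :=
  ∃ x y z : ℝ, x ≠ y ∧ x ≠ z ∧ y ≠ z ∧
    (p.map (Int.castRingHom ℝ)).IsRoot x ∧
    (p.map (Int.castRingHom ℝ)).IsRoot y ∧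
    (p.map (Int.castRingHom ℝ)).IsRoot z

lemma aux_natdeg (c d : ℤ) :
    (X ^ 3 + C c * X ^ 2 - C d * X - 1 : ℤ[X]).natDegree = 3 := by
  compute_degree <;> first | rfl | simp

lemma aux_monic (c d : ℤ) : (X ^ 3 + C c * X ^ 2 - C d * X - 1 : ℤ[X]).Monic := by
  unfold Monic leadingCoeff
  rw [aux_natdeg]
  simp only [coeff_sub, coeff_add, coeff_X_pow, coeff_one, coeff_C_mul, coeff_X, coeff_C]
  norm_num

lemma aux_eval (c d r : ℤ) :
    (X ^ 3 + C c * X ^ 2 - C d * X - 1 : ℤ[X]).eval r = r^3 + c*r^2 - d*r - 1 := by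
  simp

lemma aux_irred (c d : ℤ) (h1 : c - d ≠ 0) (h2 : c + d - 2 ≠ 0) :
    Irreducible ((X ^ 3 + C c * X ^ 2 - C d * X - 1 : ℤ[X]).map (Int.castRingHom ℚ)) := by
  rw [← Polynomial.IsPrimitive.Int.irreducible_iff_irreducible_map_cast
    (aux_monic c d).isPrimitive]
  rw [(aux_monic c d).irreducible_iff_roots_eq_zero_of_degree_le_three
    (by rw [aux_natdeg]; norm_num) (by rw [aux_natdeg])]
  rw [Multiset.eq_zero_iff_forall_notMem]
  intro r hr
  rw [mem_roots (aux_monic c d).ne_zero, IsRoot, aux_eval] at hr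
  have hu : IsUnit r := IsUnit.of_mul_eq_one (a := r) (r^2 + c*r - d) (by linarith [hr])
  rcases Int.isUnit_iff.mp hu with rfl | rfl
  · apply h1; linarith [hr]
  · apply h2; linarith [hr]

lemma aux_roots (c d : ℤ) (h1 : 0 < c - d) (h2 : 0 < c + d - 2) :
    ∃ x y z : ℝ, x ≠ y ∧ x ≠ z ∧ y ≠ z ∧
    ((X ^ 3 + C c * X ^ 2 - C d * X - 1 : ℤ[X]).map (Int.castRingHom ℝ)).IsRoot x ∧
    ((X ^ 3 + C c * X ^ 2 - C d * X - 1 : ℤ[X]).map (Int.castRingHom ℝ)).IsRoot y ∧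
    ((X ^ 3 + C c * X ^ 2 - C d * X - 1 : ℤ[X]).map (Int.castRingHom ℝ)).IsRoot z := by
  set f : ℝ → ℝ := fun t => t^3 + (c:ℝ)*t^2 - (d:ℝ)*t - 1 with hf
  have hroot : ∀ t : ℝ, f t = 0 →
      ((X ^ 3 + C c * X ^ 2 - C d * X - 1 : ℤ[X]).map (Int.castRingHom ℝ)).IsRoot t := by
    intro t ht
    simpa [IsRoot, hf] using ht
  have hc : (2:ℝ) ≤ (c:ℝ) := by
    have : (2:ℤ) ≤ c := by linarith
    exact_mod_cast this
  have hcd : (d:ℝ) < (c:ℝ) := by exact_mod_cast (by linarith : d < c)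
  have hcont : Continuous f := by fun_prop
  have v1 : f (-((c:ℝ)+1)) < 0 := by
    have : f (-((c:ℝ)+1)) = -((c:ℝ)+1)^2 + (d:ℝ)*((c:ℝ)+1) - 1 := by simp [hf]; ring
    rw [this]; nlinarith
  have v2 : 0 < f (-1) := by
    have : f (-1) = (c:ℝ) + (d:ℝ) - 2 := by simp [hf]; ring
    rw [this]
    have : (0:ℝ) < (c:ℝ) + (d:ℝ) - 2 := by exact_mod_cast h2
    linarith
  have v3 : f 0 < 0 := by simp [hf]
  have v4 : 0 < f 1 := by
    have : f 1 = (c:ℝ) - (d:ℝ) := by simp [hf]; ring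
    rw [this]; linarith
  have hab : -((c:ℝ)+1) ≤ -1 := by linarith
  obtain ⟨x, hx, hfx⟩ := intermediate_value_Ioo hab hcont.continuousOn
    (show (0:ℝ) ∈ Set.Ioo (f (-((c:ℝ)+1))) (f (-1)) from ⟨v1, v2⟩)
  obtain ⟨y, hy, hfy⟩ := intermediate_value_Ioo' (show (-1:ℝ) ≤ 0 by norm_num) hcont.continuousOn
    (show (0:ℝ) ∈ Set.Ioo (f 0) (f (-1)) from ⟨v3, v2⟩)
  obtain ⟨z, hz, hfz⟩ := intermediate_value_Ioo (show (0:ℝ) ≤ 1 by norm_num) hcont.continuousOn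
    (show (0:ℝ) ∈ Set.Ioo (f 0) (f 1) from ⟨v3, v4⟩)
  exact ⟨x, y, z, by rintro rfl; exact absurd hy.1 (by linarith [hx.2]),
    by rintro rfl; exact absurd hz.1 (by linarith [hx.2]),
    by rintro rfl; exact absurd hz.1 (by linarith [hy.2]),
    hroot x hfx, hroot y hfy, hroot z hfz⟩

theorem charpoly_two_parameter_family (a b : ℤ) (ha : 0 ≤ a) (hb : 0 ≤ b) :
    (!![0, 1, 0; 0, 0, 1; 1, 1 + a - b, -((a + 2) * (b + 1))] :
        Matrix (Fin 3) (Fin 3) ℤ).charpoly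
      = X ^ 3 + C ((a + 2) * (b + 1)) * X ^ 2 - C (1 + a - b) * X - 1 ∧
    Irreducible
      (((!![0, 1, 0; 0, 0, 1; 1, 1 + a - b, -((a + 2) * (b + 1))] :
          Matrix (Fin 3) (Fin 3) ℤ).charpoly).map (Int.castRingHom ℚ)) ∧
    hasThreeDistinctRealRoots
      (!![0, 1, 0; 0, 0, 1; 1, 1 + a - b, -((a + 2) * (b + 1))] :
        Matrix (Fin 3) (Fin 3) ℤ).charpoly := by
  have hcp : (!![0, 1, 0; 0, 0, 1; 1, 1 + a - b, -((a + 2) * (b + 1))] :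
        Matrix (Fin 3) (Fin 3) ℤ).charpoly
      = X ^ 3 + C ((a + 2) * (b + 1)) * X ^ 2 - C (1 + a - b) * X - 1 := by
    rw [Matrix.charpoly, Matrix.det_fin_three]
    simp [charmatrix_apply, Matrix.diagonal]
    ring
  have h1 : 0 < (a + 2) * (b + 1) - (1 + a - b) := by nlinarith
  have h2 : 0 < (a + 2) * (b + 1) + (1 + a - b) - 2 := by nlinarith
  refine ⟨hcp, ?_, ?_⟩
  · rw [hcp]; exact aux_irred _ _ (by linarith) (by linarith)
  · rw [hasThreeDistinctRealRoots, hcp]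
    exact aux_roots _ _ h1 h2
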